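/- Assume there exists u ∈ (θ, ∞) with P(u) > 0. Then P(t) → −∞ as t → +∞, and there exists a unique h ∈ (θ, ∞) such that P(h) = 0. -/

import Mathlib

open Real Filter

/-- If there is `u ∈ (θ, ∞)` with `P u > 0`, then `P t → -∞` as `t → ∞`,
and there exists a unique `h ∈ (θ, ∞)` with `P h = 0`. -/
theorem pressure_unique_zero
    (m : ℕ) (hm : 1 ≤ m) (γ : Fin m → ℕ → ℝ)
    (hγpos : ∀ i j, 0 < γ i j)
    (hγsum : ∀ i, Summable (fun j => γ i j))
    (hγsup : ∃ C : ℝ, C < 1 ∧ ∀ i j, γ i j ≤ C)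
    (θ : ℝ)
    (hθ : θ = ⨆ i : Fin m, sInf {t : ℝ | 0 < t ∧ Summable (fun j => γ i j ^ t)})
    (η : Fin m → ℝ) (hηpos : ∀ i, 0 < η i) (hηsum : ∑ i, η i = 1)
    (P : ℝ → ℝ)
    (hP : ∀ t : ℝ, P t = ∑ i, η i * Real.log (∑' j, γ i j ^ t))
    (hu : ∃ u ∈ Set.Ioi θ, 0 < P u) :
    Tendsto P atTop atBot ∧ ∃! h : ℝ, h ∈ Set.Ioi θ ∧ P h = 0 := by
  obtain ⟨C, hC1, hγC⟩ := hγsup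
  have hi0 : (0 : ℕ) < m := hm
  have hC0 : 0 < C := lt_of_lt_of_le (hγpos ⟨0, hi0⟩ 0) (hγC _ 0)
  have hγlt1 : ∀ i j, γ i j < 1 := fun i j => lt_of_le_of_lt (hγC i j) hC1
  -- summability above θ
  have hθi : ∀ i : Fin m, sInf {t : ℝ | 0 < t ∧ Summable fun j => γ i j ^ t} ≤ θ := by
    rw [hθ]
    intro i
    exact le_ciSup (f := fun i : Fin m => sInf {t : ℝ | 0 < t ∧ Summable fun j => γ i j ^ t})
      (Set.Finite.bddAbove (Set.finite_range _)) i
  have hSne : ∀ i : Fin m, ({t : ℝ | 0 < t ∧ Summable fun j => γ i j ^ t}).Nonempty := by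
    intro i
    exact ⟨1, one_pos, by simpa [Real.rpow_one] using hγsum i⟩
  have hsum : ∀ i : Fin m, ∀ t : ℝ, θ < t → Summable fun j => γ i j ^ t := by
    intro i t ht
    obtain ⟨s, ⟨hs0, hssum⟩, hst⟩ := exists_lt_of_csInf_lt (hSne i) (lt_of_le_of_lt (hθi i) ht)
    exact hssum.of_nonneg_of_le (fun j => (Real.rpow_pos_of_pos (hγpos i j) t).le)
      (fun j => Real.rpow_le_rpow_of_exponent_ge (hγpos i j) (hγlt1 i j).le hst.le)
  have hSpos : ∀ i : Fin m, ∀ t : ℝ, θ < t → 0 < ∑' j, γ i j ^ t := fun i t ht =>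
    Summable.tsum_pos (hsum i t ht) (fun j => (Real.rpow_pos_of_pos (hγpos i j) t).le) 0
      (Real.rpow_pos_of_pos (hγpos i 0) t)
  obtain ⟨u, huθ, hPu⟩ := hu
  have huθ' : θ < u := huθ
  -- key upper bound for t ≥ u
  have key : ∀ t : ℝ, u ≤ t → P t ≤ (t - u) * Real.log C + P u := by
    intro t hut
    have htθ : θ < t := lt_of_lt_of_le huθ' hut
    have hb : ∀ i : Fin m,
        Real.log (∑' j, γ i j ^ t) ≤ (t - u) * Real.log C + Real.log (∑' j, γ i j ^ u) := by
      intro i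
      have h1 : ∀ j, γ i j ^ t ≤ C ^ (t - u) * γ i j ^ u := by
        intro j
        have : γ i j ^ t = γ i j ^ (t - u) * γ i j ^ u := by
          rw [← Real.rpow_add (hγpos i j)]; ring_nf
        rw [this]
        exact mul_le_mul_of_nonneg_right
          (Real.rpow_le_rpow (hγpos i j).le (hγC i j) (by linarith))
          (Real.rpow_pos_of_pos (hγpos i j) u).le
      have h2 : (∑' j, γ i j ^ t) ≤ C ^ (t - u) * ∑' j, γ i j ^ u := by
        rw [← tsum_mul_left]
        exact Summable.tsum_le_tsum h1 (hsum i t htθ) ((hsum i u huθ').mul_left _)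
      calc Real.log (∑' j, γ i j ^ t)
          ≤ Real.log (C ^ (t - u) * ∑' j, γ i j ^ u) := Real.log_le_log (hSpos i t htθ) h2
        _ = (t - u) * Real.log C + Real.log (∑' j, γ i j ^ u) := by
            rw [Real.log_mul (ne_of_gt (Real.rpow_pos_of_pos hC0 _)) (ne_of_gt (hSpos i u huθ')),
              Real.log_rpow hC0]
    calc P t = ∑ i, η i * Real.log (∑' j, γ i j ^ t) := hP t
      _ ≤ ∑ i, η i * ((t - u) * Real.log C + Real.log (∑' j, γ i j ^ u)) :=
          Finset.sum_le_sum fun i _ => mul_le_mul_of_nonneg_left (hb i) (hηpos i).le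
      _ = (∑ i, η i) * ((t - u) * Real.log C) + ∑ i, η i * Real.log (∑' j, γ i j ^ u) := by
          rw [Finset.sum_mul]; rw [← Finset.sum_add_distrib]; congr 1; ext i; ring
      _ = (t - u) * Real.log C + P u := by rw [hηsum, one_mul, hP u]
  have hlogC : Real.log C < 0 := Real.log_neg hC0 hC1
  have htend : Tendsto P atTop atBot := by
    apply tendsto_atBot_mono' atTop (f₁ := fun t => (t - u) * Real.log C + P u)
    · filter_upwards [eventually_ge_atTop u] with t ht using key t ht
    · apply tendsto_atBot_add_const_right
      exact Tendsto.atTop_mul_const_of_neg hlogC (tendsto_atTop_add_const_right _ _ tendsto_id)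
  refine ⟨htend, ?_⟩
  -- continuity on Ici u
  have hScont : ∀ i : Fin m, ContinuousOn (fun t => ∑' j, γ i j ^ t) (Set.Ici u) := by
    intro i
    apply continuousOn_tsum (u := fun j => γ i j ^ u)
    · intro j
      have : Continuous fun t : ℝ => γ i j ^ t := by
        simp only [Real.rpow_def_of_pos (hγpos i j)]
        exact Real.continuous_exp.comp (continuous_const.mul continuous_id)
      exact this.continuousOn
    · exact hsum i u huθ'
    · intro j t ht
      rw [Real.norm_of_nonneg (Real.rpow_pos_of_pos (hγpos i j) t).le]
      exact Real.rpow_le_rpow_of_exponent_ge (hγpos i j) (hγlt1 i j).le ht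
  have hPcont : ContinuousOn P (Set.Ici u) := by
    have : ContinuousOn (fun t => ∑ i, η i * Real.log (∑' j, γ i j ^ t)) (Set.Ici u) := by
      apply continuousOn_finset_sum
      intro i _
      exact continuousOn_const.mul
        ((hScont i).log fun t ht => ne_of_gt (hSpos i t (lt_of_lt_of_le huθ' ht)))
    exact this.congr fun t _ => hP t
  -- strict antitonicity on Ioi θ
  have hanti : StrictAntiOn P (Set.Ioi θ) := by
    intro s hs t ht hst
    rw [hP s, hP t]
    apply Finset.sum_lt_sum_of_nonempty (@Finset.univ_nonempty _ _ (Fin.pos_iff_nonempty.mp hi0))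
    intro i _
    refine mul_lt_mul_of_pos_left ?_ (hηpos i)
    refine Real.log_lt_log (hSpos i t ht) ?_
    exact Summable.tsum_lt_tsum
      (fun j => Real.rpow_le_rpow_of_exponent_ge (hγpos i j) (hγlt1 i j).le hst.le)
      (Real.rpow_lt_rpow_of_exponent_gt (hγpos i 0) (hγlt1 i 0) hst)
      (hsum i t ht) (hsum i s hs)
  -- find v with P v < 0
  obtain ⟨v, hPv, hvu⟩ :=
    ((htend.eventually (eventually_lt_atBot (0 : ℝ))).and (eventually_ge_atTop u)).exists
  obtain ⟨h0, hh0, hPh0⟩ :=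
    intermediate_value_Icc' hvu (hPcont.mono (Set.Icc_subset_Ici_self)) ⟨hPv.le, hPu.le⟩
  have hh0θ : h0 ∈ Set.Ioi θ := lt_of_lt_of_le huθ' hh0.1
  refine ⟨h0, ⟨hh0θ, hPh0⟩, ?_⟩
  rintro h' ⟨hh'θ, hPh'⟩
  exact hanti.injOn hh'θ hh0θ (hPh'.trans hPh0.symm)
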